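/- Let R be a commutative Noetherian ring, I_1 an ideal, F_1 ∈ I_1 and F_2 ∈ R. Then √(F_2 I_1 + (F_1)) = √I_1 ∩ √(F_1, F_2). -/

import Mathlib

/-- The radical of the basic double link ideal `F₂I₁ + (F₁)` is `√I₁ ∩ √(F₁,F₂)`. -/
theorem radical_basic_double_link
    {R : Type*} [CommRing R] [IsNoetherianRing R]
    (I₁ : Ideal R) (F₁ F₂ : R) (h1 : F₁ ∈ I₁) :
    (Ideal.span {F₂} * I₁ + Ideal.span {F₁}).radical =
      I₁.radical ⊓ (Ideal.span {F₁, F₂}).radical := by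
  apply le_antisymm
  · apply le_inf
    · apply Ideal.radical_mono
      apply sup_le
      · exact le_trans Ideal.mul_le_right le_rfl
      · rwa [Ideal.span_le, Set.singleton_subset_iff]
    · apply Ideal.radical_mono
      apply sup_le
      · refine le_trans Ideal.mul_le_left ?_
        apply Ideal.span_mono
        simp
      · apply Ideal.span_mono
        simp
  · rintro x ⟨⟨n, hn⟩, ⟨m, hm⟩⟩
    rw [Ideal.mem_span_pair] at hm
    obtain ⟨a, b, hab⟩ := hm
    refine ⟨m + n, ?_⟩
    have : x ^ (m + n) = (b * (F₂ * x ^ n)) + (a * x ^ n) * F₁ := by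
      rw [pow_add, ← hab]; ring
    rw [this]
    refine Ideal.add_mem _ ?_ ?_
    · exact Ideal.mem_sup_left (Ideal.mul_mem_left _ _
        (Ideal.mul_mem_mul (Ideal.mem_span_singleton_self F₂) hn))
    · exact Ideal.mem_sup_right (Ideal.mul_mem_left _ _
        (Ideal.mem_span_singleton_self F₁))
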